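/- (Lemma 6.) Let n ≥ 3 and let S ⊆ ℤ be a finite nonempty set of integers, and let A be the K-linear span of {e_i : i ∈ S} inside the free K-module with basis (e_k)_{k∈ℤ}, where K = ℚ(p,q). If A is closed under the (p,q)-deformed Virasoro–Witt n-bracket and the Filippov fundamental identity holds for all elements of A, then |S| ≤ n + 1. -/

import Mathlib

/-- The structure constant `c_n(i_1,…,i_n) = (p q⁻¹)^{⌊(n−1)/2⌋·(i_1+⋯+i_n)} · det M`,
where `M_{r,j} = p^{(r − 2⌊(n−1)/2⌋)·i_j} q^{r·i_j}` for `r = 0,…,n−1`, `j = 1,…,n`. -/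
noncomputable def vwC {K : Type*} [Field K] (p q : K) (n : ℕ) (i : Fin n → ℤ) : K :=
  (p * q⁻¹) ^ (((((n - 1) / 2 : ℕ) : ℤ)) * ∑ j, i j) *
    Matrix.det (Matrix.of fun r j : Fin n =>
      p ^ (((r : ℤ) - 2 * (((n - 1) / 2 : ℕ) : ℤ)) * i j) * q ^ ((r : ℤ) * i j))

/-- The `(p,q)`-deformed Virasoro–Witt `n`-bracket: the (alternating) `n`-multilinear
map on the free module `ℤ →₀ K` determined on basis vectors by
`[e_{i_1},…,e_{i_n}] = c_n(i_1,…,i_n) • e_{i_1+⋯+i_n}`. -/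
noncomputable def vwBr {K : Type*} [Field K] (p q : K) (n : ℕ)
    (v : Fin n → (ℤ →₀ K)) : ℤ →₀ K :=
  ∑ f ∈ Fintype.piFinset (fun j => (v j).support),
    ((∏ j, v j (f j)) * vwC p q n f) • Finsupp.single (∑ j, f j) (1 : K)

/-- The Filippov fundamental identity for the tuples `(Y₁,…,Y_{n−1})` (the first `n−1`
components of `Y`) and `(X₁,…,X_n)`:
`[Y_1,…,Y_{n−1},[X_1,…,X_n]] = Σ_{k=1}^n [X_1,…,[Y_1,…,Y_{n−1},X_k],…,X_n]`. -/
noncomputable def holdsFI {K : Type*} [Field K] (p q : K) (n : ℕ) (hn : 0 < n)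
    (Y X : Fin n → (ℤ →₀ K)) : Prop :=
  vwBr p q n (Function.update Y ⟨n - 1, Nat.sub_lt hn Nat.one_pos⟩ (vwBr p q n X)) =
    ∑ k : Fin n, vwBr p q n (Function.update X k
      (vwBr p q n (Function.update Y ⟨n - 1, Nat.sub_lt hn Nat.one_pos⟩ (X k))))

/-- The field `K = ℚ(p,q)` of rational functions in two variables over `ℚ`. -/
abbrev Kpq : Type := FractionRing (MvPolynomial (Fin 2) ℚ)

/-- The image of the first variable `p` in `ℚ(p,q)`. -/
noncomputable def pVar : Kpq :=
  algebraMap (MvPolynomial (Fin 2) ℚ) Kpq (MvPolynomial.X 0)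

/-- The image of the second variable `q` in `ℚ(p,q)`. -/
noncomputable def qVar : Kpq :=
  algebraMap (MvPolynomial (Fin 2) ℚ) Kpq (MvPolynomial.X 1)

-- determinant factorization & nonvanishing
theorem vwC_ne_zero {K : Type*} [Field K] {p q : K} (hp : p ≠ 0) (hq : q ≠ 0)
    (hpq : ∀ a b : ℤ, (p*q) ^ a = (p*q) ^ b → a = b)
    (n : ℕ) (i : Fin n → ℤ) (hi : Function.Injective i) : vwC p q n i ≠ 0 := by
  set M0 : ℤ := (((n - 1) / 2 : ℕ) : ℤ) with hM0
  apply mul_ne_zero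
  · exact zpow_ne_zero _ (mul_ne_zero hp (inv_ne_zero hq))
  · have hent : (Matrix.of fun r j : Fin n =>
        p ^ (((r : ℤ) - 2 * M0) * i j) * q ^ ((r : ℤ) * i j))
        = Matrix.of fun r j : Fin n =>
          (p ^ ((-(2 * M0)) * i j)) * ((Matrix.vandermonde (fun j => (p*q) ^ (i j))).transpose r j) := by
      ext r j
      simp only [Matrix.of_apply, Matrix.transpose_apply, Matrix.vandermonde_apply]
      rw [← zpow_natCast ((p*q) ^ (i j)) r, ← zpow_mul, mul_zpow,
        show ((r : ℤ) - 2 * M0) * i j = (-(2*M0)) * i j + (r : ℤ) * i j by ring,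
        zpow_add₀ hp, show i j * (r : ℤ) = (r:ℤ) * i j by ring]
      ring
    rw [hent, Matrix.det_mul_row, Matrix.det_transpose, Matrix.det_vandermonde]
    apply mul_ne_zero
    · exact Finset.prod_ne_zero_iff.2 fun j _ => zpow_ne_zero _ hp
    · refine Finset.prod_ne_zero_iff.2 fun r _ => Finset.prod_ne_zero_iff.2 fun j hj => ?_
      refine sub_ne_zero.2 fun h => ?_
      have : j = r := hi (hpq _ _ h)
      simp [this] at hj

theorem kpq_inj : Function.Injective (algebraMap (MvPolynomial (Fin 2) ℚ) Kpq) :=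
  IsFractionRing.injective _ _

theorem pVar_ne_zero : pVar ≠ 0 := by
  intro h
  have := kpq_inj (h.trans (map_zero _).symm)
  exact MvPolynomial.X_ne_zero 0 this

theorem qVar_ne_zero : qVar ≠ 0 := by
  intro h
  have := kpq_inj (h.trans (map_zero _).symm)
  exact MvPolynomial.X_ne_zero 1 this

theorem pq_pow_eq_one {k : ℕ} (h : (pVar * qVar) ^ k = 1) : k = 0 := by
  have h1 : (algebraMap (MvPolynomial (Fin 2) ℚ) Kpq) ((MvPolynomial.X 0 * MvPolynomial.X 1) ^ k)
      = algebraMap (MvPolynomial (Fin 2) ℚ) Kpq 1 := by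
    rw [map_pow, map_mul, map_one]; exact h
  have h2 : (MvPolynomial.X (R := ℚ) (0 : Fin 2) * MvPolynomial.X 1) ^ k = 1 := kpq_inj h1
  have h3 := congrArg (MvPolynomial.eval (fun _ : Fin 2 => (2 : ℚ))) h2
  simp [mul_pow] at h3
  by_contra hk
  have : (1:ℚ) < 2 ^ k * 2 ^ k := by
    have : (1:ℚ) < 2 ^ k := one_lt_pow₀ (by norm_num) hk
    nlinarith
  rw [h3] at this
  exact lt_irrefl _ this

theorem pq_zpow_inj : ∀ a b : ℤ, (pVar * qVar) ^ a = (pVar * qVar) ^ b → a = b := by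
  have hne : pVar * qVar ≠ 0 := mul_ne_zero pVar_ne_zero qVar_ne_zero
  have key : ∀ a b : ℤ, a ≤ b → (pVar * qVar) ^ a = (pVar * qVar) ^ b → a = b := by
    intro a b hab h
    have h1 : (pVar * qVar) ^ (b - a) = 1 := by
      rw [zpow_sub₀ hne, h, div_self (zpow_ne_zero _ hne)]
    have h2 : (pVar * qVar) ^ ((b - a).toNat) = 1 := by
      rw [← zpow_natCast, Int.toNat_of_nonneg (by omega)]; exact h1
    have := pq_pow_eq_one h2
    omega
  intro a b h
  rcases le_total a b with hab | hab
  · exact key a b hab h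
  · exact (key b a hab h.symm).symm

theorem vwBr_single {K : Type*} [Field K] (p q : K) (n : ℕ) (i : Fin n → ℤ) :
    vwBr p q n (fun j => Finsupp.single (i j) 1)
      = vwC p q n i • Finsupp.single (∑ j, i j) 1 := by
  unfold vwBr
  have hpi : (Fintype.piFinset (fun j => (Finsupp.single (i j) (1:K)).support)) = {i} := by
    ext f
    simp only [Fintype.mem_piFinset, Finsupp.support_single_ne_zero _ (one_ne_zero (α := K)),
      Finset.mem_singleton, funext_iff]
  rw [hpi, Finset.sum_singleton]
  simp [Finsupp.single_eq_same]

/-- staircase index set -/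
def stairJ (n m a b : ℕ) : Finset ℕ :=
  insert (n - 1 - a + b) (Finset.range (n - 1 - a) ∪ Finset.Ico (m - a) m)

theorem stairJ_mem {n m a b k : ℕ} :
    k ∈ stairJ n m a b ↔ k = n - 1 - a + b ∨ k < n - 1 - a ∨ (m - a ≤ k ∧ k < m) := by
  simp [stairJ, Finset.mem_insert, Finset.mem_union, Finset.mem_range, Finset.mem_Ico]

theorem stairJ_not_mem {n m a b : ℕ} (hn : 3 ≤ n) (hm : n + 2 ≤ m)
    (ha : a ≤ n - 1) (hb : b ≤ m - n) :
    n - 1 - a + b ∉ Finset.range (n - 1 - a) ∪ Finset.Ico (m - a) m := by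
  simp only [Finset.mem_union, Finset.mem_range, Finset.mem_Ico]
  omega

theorem stairJ_card {n m a b : ℕ} (hn : 3 ≤ n) (hm : n + 2 ≤ m)
    (ha : a ≤ n - 1) (hb : b ≤ m - n) : (stairJ n m a b).card = n := by
  rw [stairJ, Finset.card_insert_of_notMem (stairJ_not_mem hn hm ha hb),
    Finset.card_union_of_disjoint, Finset.card_range, Nat.card_Ico]
  · omega
  · rw [Finset.disjoint_left]
    intro k hk hk'
    simp only [Finset.mem_range] at hk
    simp only [Finset.mem_Ico] at hk'
    omega

theorem stairJ_lt {n m a b k : ℕ} (hn : 3 ≤ n) (hm : n + 2 ≤ m)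
    (ha : a ≤ n - 1) (hb : b ≤ m - n) (hk : k ∈ stairJ n m a b) : k < m := by
  rw [stairJ_mem] at hk; omega

/-- staircase sum -/
def stairSum (s : ℕ → ℤ) (n m a b : ℕ) : ℤ := ∑ k ∈ stairJ n m a b, s k

theorem stairSum_eq (s : ℕ → ℤ) {n m a b : ℕ} (hn : 3 ≤ n) (hm : n + 2 ≤ m)
    (ha : a ≤ n - 1) (hb : b ≤ m - n) :
    stairSum s n m a b
      = s (n - 1 - a + b) + ∑ k ∈ Finset.range (n - 1 - a) ∪ Finset.Ico (m - a) m, s k := by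
  rw [stairSum, stairJ, Finset.sum_insert (stairJ_not_mem hn hm ha hb)]

theorem stairSum_lt (s : ℕ → ℤ) (hs : StrictMono s) {n m a b b' : ℕ} (hn : 3 ≤ n)
    (hm : n + 2 ≤ m) (ha : a ≤ n - 1) (hb : b < b') (hb' : b' ≤ m - n) :
    stairSum s n m a b < stairSum s n m a b' := by
  rw [stairSum_eq s hn hm ha (le_of_lt (lt_of_lt_of_le hb hb')),
    stairSum_eq s hn hm ha hb']
  exact add_lt_add_of_lt_of_le (hs (by omega)) le_rfl

theorem stairSum_boundary (s : ℕ → ℤ) {n m a : ℕ} (hn : 3 ≤ n) (hm : n + 2 ≤ m)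
    (ha : a + 1 ≤ n - 1) :
    stairSum s n m a (m - n) = stairSum s n m (a + 1) 0 := by
  unfold stairSum
  congr 1
  ext k
  rw [stairJ_mem, stairJ_mem]
  omega

/-- staircase enumeration -/
noncomputable def stairPhi (s : ℕ → ℤ) (n m t : ℕ) : ℤ :=
  if t < n * (m - n) then stairSum s n m (t / (m - n)) (t % (m - n))
  else stairSum s n m (n - 1) (m - n) + ((t : ℤ) - ((n * (m - n) : ℕ) : ℤ))

theorem stairPhi_strictMono (s : ℕ → ℤ) (hs : StrictMono s) {n m : ℕ}
    (hn : 3 ≤ n) (hm : n + 2 ≤ m) : StrictMono (stairPhi s n m) := by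
  have hD : 0 < m - n := by omega
  apply strictMono_nat_of_lt_succ
  intro t
  by_cases ht : t < n * (m - n)
  · obtain ⟨a, hA⟩ : ∃ a, t / (m - n) = a := ⟨_, rfl⟩
    obtain ⟨b, hB⟩ : ∃ b, t % (m - n) = b := ⟨_, rfl⟩
    have hab : (m - n) * a + b = t := by rw [← hA, ← hB]; exact Nat.div_add_mod t (m - n)
    have hbD : b < m - n := by rw [← hB]; exact Nat.mod_lt _ hD
    have han : a < n := by
      rw [← hA]
      exact Nat.div_lt_of_lt_mul (by rw [mul_comm] at ht; exact ht)
    have hmul1 : (m - n) * (a + 1) = (m - n) * a + (m - n) := by ring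
    have hmul3 : n * (m - n) = (m - n) * n := Nat.mul_comm _ _
    by_cases hb1 : b + 1 < m - n
    · have hmul2 : (m - n) * (a + 1) ≤ (m - n) * n := Nat.mul_le_mul_left _ (by omega)
      have ht1 : t + 1 < n * (m - n) := by omega
      have hdiv : (t + 1) / (m - n) = a := by
        rw [show t + 1 = (m - n) * a + (b + 1) by omega, Nat.mul_add_div hD,
          Nat.div_eq_of_lt hb1, Nat.add_zero]
      have hmod : (t + 1) % (m - n) = b + 1 := by
        rw [show t + 1 = (m - n) * a + (b + 1) by omega, Nat.mul_add_mod,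
          Nat.mod_eq_of_lt hb1]
      rw [stairPhi, stairPhi, if_pos ht, if_pos ht1, hdiv, hmod, hA, hB]
      exact stairSum_lt s hs hn hm (by omega) (by omega) (by omega)
    · have hbD' : b + 1 = m - n := by omega
      by_cases ha1 : a + 1 < n
      · have hmul2 : (m - n) * (a + 2) ≤ (m - n) * n := Nat.mul_le_mul_left _ (by omega)
        have hmul4 : (m - n) * (a + 2) = (m - n) * a + (m - n) + (m - n) := by ring
        have ht1 : t + 1 < n * (m - n) := by omega
        have hdiv : (t + 1) / (m - n) = a + 1 := by
          rw [show t + 1 = (m - n) * (a + 1) + 0 by omega, Nat.mul_add_div hD,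
            Nat.div_eq_of_lt hD, Nat.add_zero]
        have hmod : (t + 1) % (m - n) = 0 := by
          rw [show t + 1 = (m - n) * (a + 1) + 0 by omega, Nat.mul_add_mod, Nat.zero_mod]
        rw [stairPhi, stairPhi, if_pos ht, if_pos ht1, hdiv, hmod, hA, hB,
          ← stairSum_boundary s hn hm (by omega)]
        exact stairSum_lt s hs hn hm (by omega) (by omega) (by omega)
      · have hmul5 : (m - n) * (a + 1) = (m - n) * n := by rw [show a + 1 = n by omega]
        have ht1 : t + 1 = n * (m - n) := by omega
        rw [stairPhi, stairPhi, if_pos ht, if_neg (by omega), hA, hB, ht1, sub_self,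
          add_zero, show a = n - 1 by omega]
        exact stairSum_lt s hs hn hm (by omega) (by omega) (by omega)
  · rw [stairPhi, stairPhi, if_neg ht, if_neg (by omega)]
    push_cast
    linarith

theorem stairPhi_form (s : ℕ → ℤ) {n m t : ℕ} (hn : 3 ≤ n) (hm : n + 2 ≤ m)
    (ht : t ≤ n * (m - n)) :
    ∃ a b, a ≤ n - 1 ∧ b ≤ m - n ∧ stairPhi s n m t = stairSum s n m a b := by
  by_cases h : t < n * (m - n)
  · refine ⟨t / (m - n), t % (m - n), ?_, ?_, by rw [stairPhi, if_pos h]⟩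
    · have : t / (m - n) < n := Nat.div_lt_of_lt_mul (by rw [Nat.mul_comm] at h; exact h)
      omega
    · have : t % (m - n) < m - n := Nat.mod_lt _ (by omega)
      omega
  · refine ⟨n - 1, m - n, le_refl _, le_refl _, ?_⟩
    rw [stairPhi, if_neg h]
    have : t = n * (m - n) := by omega
    rw [this]
    push_cast
    ring

/-- **Lemma 6.** Let `n ≥ 3`, let `S ⊆ ℤ` be finite and nonempty, and
let `A` be the `K`-span of `{e_i : i ∈ S}` over `K = ℚ(p,q)`. If `A` is closed under
the `(p,q)`-deformed Virasoro–Witt `n`-bracket and the Filippov fundamental identity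
holds for all elements of `A`, then `|S| ≤ n + 1`. -/
theorem finite_n_Lie_subalgebra_card_le
    (n : ℕ) (hn : 3 ≤ n) (S : Finset ℤ) (hS : S.Nonempty)
    (A : Submodule Kpq (ℤ →₀ Kpq))
    (hA : A = Submodule.span Kpq ((fun i : ℤ => Finsupp.single i (1 : Kpq)) '' ↑S))
    (hclosed : ∀ v : Fin n → (ℤ →₀ Kpq), (∀ j, v j ∈ A) → vwBr pVar qVar n v ∈ A)
    (hFI : ∀ Y X : Fin n → (ℤ →₀ Kpq), (∀ j, Y j ∈ A) → (∀ j, X j ∈ A) →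
      holdsFI pVar qVar n (by omega) Y X) :
    S.card ≤ n + 1 := by
  by_contra hcard
  push_neg at hcard
  have hm2 : n + 2 ≤ S.card := hcard
  have hm0 : 0 < S.card := by omega
  -- the sorted enumeration of S
  set s : Fin S.card ↪o ℤ := S.orderEmbOfFin rfl with hsdef
  have hsmem : ∀ k, s k ∈ S := fun k => S.orderEmbOfFin_mem rfl k
  have hsmono : StrictMono s := s.strictMono
  -- extension to a strictly monotone map on ℕ
  set s' : ℕ → ℤ := fun k =>
    if h : k < S.card then s ⟨k, h⟩ else s ⟨S.card - 1, by omega⟩ + ((k : ℤ) - S.card + 1)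
    with hs'def
  have hs'lt : ∀ (k : ℕ) (h : k < S.card), s' k = s ⟨k, h⟩ := by
    intro k h; simp only [hs'def, dif_pos h]
  have hs'mem : ∀ k < S.card, s' k ∈ S := by
    intro k h; rw [hs'lt k h]; exact hsmem _
  have hs' : StrictMono s' := by
    intro x y hxy
    by_cases hx : x < S.card
    · by_cases hy : y < S.card
      · rw [hs'lt x hx, hs'lt y hy]
        exact hsmono (show (⟨x, hx⟩ : Fin S.card) < ⟨y, hy⟩ from hxy)
      · rw [hs'lt x hx]
        simp only [hs'def, dif_neg hy]
        have h1 : s ⟨x, hx⟩ ≤ s ⟨S.card - 1, by omega⟩ := by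
          apply hsmono.monotone
          exact Fin.mk_le_mk.2 (by omega)
        have h2 : (1 : ℤ) ≤ (y : ℤ) - S.card + 1 := by
          have : (S.card : ℤ) ≤ y := by exact_mod_cast le_of_not_gt hy
          linarith
        linarith
    · have hy : ¬ y < S.card := by omega
      simp only [hs'def, dif_neg hx, dif_neg hy]
      have : (x : ℤ) < y := by exact_mod_cast hxy
      linarith
  -- membership in A
  have hA' : ∀ x : ℤ →₀ Kpq, x ∈ A ↔ ↑x.support ⊆ (S : Set ℤ) := by
    intro x
    rw [hA, ← Finsupp.supported_eq_span_single, Finsupp.mem_supported]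
  -- closure on distinct basis vectors
  have hKC : ∀ f : Fin n → ℤ, Function.Injective f → (∀ j, f j ∈ S) → (∑ j, f j) ∈ S := by
    intro f hinj hmem
    have hv : ∀ j, Finsupp.single (f j) (1 : Kpq) ∈ A := by
      intro j
      rw [hA' _, Finsupp.support_single_ne_zero _ one_ne_zero]
      simpa using hmem j
    have hbr := hclosed (fun j => Finsupp.single (f j) 1) hv
    rw [vwBr_single] at hbr
    have hc : vwC pVar qVar n f ≠ 0 :=
      vwC_ne_zero pVar_ne_zero qVar_ne_zero pq_zpow_inj n f hinj
    have h2 : Finsupp.single (∑ j, f j) (1 : Kpq) ∈ A := by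
      have := A.smul_mem (vwC pVar qVar n f)⁻¹ hbr
      rwa [smul_smul, inv_mul_cancel₀ hc, one_smul] at this
    have h3 := (hA' _).1 h2
    rw [Finsupp.support_single_ne_zero _ one_ne_zero] at h3
    simpa using h3
  -- closure on n-element subsets
  have hKCF : ∀ T : Finset ℤ, T ⊆ S → T.card = n → (∑ x ∈ T, x) ∈ S := by
    intro T hTS hTn
    have hsum : ∑ j : Fin n, (T.orderEmbOfFin hTn) j = ∑ x ∈ T, x := by
      have himg : Finset.image (T.orderEmbOfFin hTn) Finset.univ = T := by
        ext x
        simp only [Finset.mem_image, Finset.mem_univ, true_and]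
        constructor
        · rintro ⟨j, rfl⟩; exact T.orderEmbOfFin_mem hTn j
        · intro hx
          have : x ∈ Set.range (T.orderEmbOfFin hTn) := by
            rw [T.range_orderEmbOfFin hTn]; exact hx
          obtain ⟨j, hj⟩ := this
          exact ⟨j, hj⟩
      have h4 : ∑ x ∈ Finset.image (T.orderEmbOfFin hTn) Finset.univ, x
          = ∑ j : Fin n, (T.orderEmbOfFin hTn) j :=
        Finset.sum_image (fun a _ b _ h => (T.orderEmbOfFin hTn).injective h)
      rw [himg] at h4
      exact h4.symm
    rw [← hsum]
    exact hKC _ (T.orderEmbOfFin hTn).injective (fun j => hTS (T.orderEmbOfFin_mem hTn j))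
  -- the staircase sums all belong to S
  have hmemS : ∀ a b, a ≤ n - 1 → b ≤ S.card - n → stairSum s' n S.card a b ∈ S := by
    intro a b ha hb
    have hsum : ∑ x ∈ (stairJ n S.card a b).image s', x = ∑ k ∈ stairJ n S.card a b, s' k :=
      Finset.sum_image (fun x _ y _ h => hs'.injective h)
    have hTS : (stairJ n S.card a b).image s' ⊆ S := by
      intro x hx
      obtain ⟨k, hk, rfl⟩ := Finset.mem_image.1 hx
      exact hs'mem k (stairJ_lt hn hm2 ha hb hk)
    have hTn : ((stairJ n S.card a b).image s').card = n := by
      rw [Finset.card_image_of_injective _ hs'.injective, stairJ_card hn hm2 ha hb]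
    have := hKCF _ hTS hTn
    rwa [hsum, ← stairSum] at this
  -- conclude via cardinality
  have hmap : ∀ t ∈ Finset.range (n * (S.card - n) + 1), stairPhi s' n S.card t ∈ S := by
    intro t ht
    rw [Finset.mem_range] at ht
    obtain ⟨a, b, ha, hb, heq⟩ := stairPhi_form s' hn hm2 (show t ≤ n * (S.card - n) by omega)
    rw [heq]
    exact hmemS a b ha hb
  have hle := Finset.card_le_card_of_injOn _ hmap
    ((stairPhi_strictMono s' hs' hn hm2).injective.injOn)
  rw [Finset.card_range] at hle
  have hd2 : 2 ≤ S.card - n := by omega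
  have hp1 : n * 2 ≤ n * (S.card - n) := Nat.mul_le_mul_left n hd2
  have hp2 : 3 * (S.card - n) ≤ n * (S.card - n) := Nat.mul_le_mul_right _ hn
  omega
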